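/- Let r > 0, μ > 0, B > 0, s > 0, k ∈ ℝ, and let α : ℝ → ℝ be differentiable with α(0) = 0 and α'(y) > r for all y ∈ ℝ. Let a ∈ ℝ, δ > 0, ε > 0 and let v : ℝ → ℝ be continuously differentiable on (a−δ, a+ε) with v'(x) ≥ 1 there. Assume: (1) v(x) = v(a) + (x − a) for all x ∈ [a, a+ε); (2) v is twice differentiable on (a−δ, a) and satisfies (μB − α((k−x)⁺))·v'(x) + (s²/2)·v''(x) − r·v(x) = 0 for all x ∈ (a−δ, a); (3) r·v(x) ≥ μB − α((k−x)⁺) for all x ∈ [a, a+ε). Then a ≥ k and r·v(a) = μB. -/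

import Mathlib

/-- First case of the lemma locating left borders of the dividend region: if `a`
is a left border of the dividend region with the continuation region just to its
left (where the HJB ODE holds), then `a ≥ k` and `r v(a) = μ B`. -/
theorem left_border_dividend_region_location
    (r μ B s k : ℝ) (hr : 0 < r) (hμ : 0 < μ) (hB : 0 < B) (hs : 0 < s)
    (α : ℝ → ℝ) (hα : Differentiable ℝ α) (hα0 : α 0 = 0)
    (hα' : ∀ y : ℝ, r < deriv α y)
    (a δ ε : ℝ) (hδ : 0 < δ) (hε : 0 < ε)
    (v : ℝ → ℝ)
    (hvC1 : ContDiffOn ℝ 1 v (Set.Ioo (a - δ) (a + ε)))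
    (hv' : ∀ x ∈ Set.Ioo (a - δ) (a + ε), 1 ≤ deriv v x)
    (haff : ∀ x ∈ Set.Ico a (a + ε), v x = v a + (x - a))
    (hode : ∀ x ∈ Set.Ioo (a - δ) a,
      DifferentiableAt ℝ (deriv v) x ∧
      (μ * B - α (max (k - x) 0)) * deriv v x
        + s ^ 2 / 2 * deriv (deriv v) x - r * v x = 0)
    (hsuper : ∀ x ∈ Set.Ico a (a + ε), μ * B - α (max (k - x) 0) ≤ r * v x) :
    k ≤ a ∧ r * v a = μ * B := by
  have hopen : IsOpen (Set.Ioo (a - δ) (a + ε)) := isOpen_Ioo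
  have hamem : a ∈ Set.Ioo (a - δ) (a + ε) := ⟨by linarith, by linarith⟩
  have hdiffOn : DifferentiableOn ℝ v (Set.Ioo (a - δ) (a + ε)) :=
    hvC1.differentiableOn one_ne_zero
  have hva : DifferentiableAt ℝ v a :=
    (hdiffOn a hamem).differentiableAt (hopen.mem_nhds hamem)
  -- continuity of deriv v on the open set
  have hderivCont : ContinuousOn (deriv v) (Set.Ioo (a - δ) (a + ε)) :=
    hvC1.continuousOn_deriv_of_isOpen hopen le_rfl
  have hderivContA : ContinuousAt (deriv v) a :=
    hderivCont.continuousAt (hopen.mem_nhds hamem)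
  -- deriv v a = 1
  have hIco : Set.Ico a (a + ε) ∈ nhdsWithin a (Set.Ici a) :=
    Ico_mem_nhdsGE_of_mem ⟨le_rfl, by linarith⟩
  have hf : HasDerivAt (fun x => v a + (x - a)) 1 a := by
    simpa using ((hasDerivAt_id a).sub_const a).const_add (v a)
  have hveq : HasDerivWithinAt v 1 (Set.Ici a) a := by
    refine hf.hasDerivWithinAt.congr_of_eventuallyEq ?_ (by simp)
    filter_upwards [hIco] with x hx using haff x hx
  have hderiv_a : deriv v a = 1 := by
    have h1 : derivWithin v (Set.Ici a) a = 1 :=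
      hveq.derivWithin (uniqueDiffOn_Ici a a Set.self_mem_Ici)
    have h2 : derivWithin v (Set.Ici a) a = deriv v a :=
      (hva.hasDerivAt.hasDerivWithinAt).derivWithin (uniqueDiffOn_Ici a a Set.self_mem_Ici)
    linarith [h1, h2]
  -- the auxiliary function F
  set F : ℝ → ℝ := fun x => (μ * B - α (max (k - x) 0)) * deriv v x - r * v x with hF
  have hFcont : ContinuousAt F a := by
    have h1 : ContinuousAt (fun x : ℝ => α (max (k - x) 0)) a :=
      (hα.continuous.comp
        ((continuous_const.sub continuous_id).max continuous_const)).continuousAt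
    exact ((continuousAt_const.sub h1).mul hderivContA).sub
      (continuousAt_const.mul hva.continuousAt)
  -- for every x in (a-δ, a) there is c in (x, a) with F c ≥ 0
  have key : ∀ x ∈ Set.Ioo (a - δ) a, ∃ c ∈ Set.Ioo x a, 0 ≤ F c := by
    intro x hx
    have hxa : x < a := hx.2
    have hsub : Set.Icc x a ⊆ Set.Ioo (a - δ) (a + ε) := by
      intro y hy; exact ⟨lt_of_lt_of_le hx.1 hy.1, lt_of_le_of_lt hy.2 (by linarith)⟩
    have hsub' : Set.Ioo x a ⊆ Set.Ioo (a - δ) a := by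
      intro y hy; exact ⟨lt_trans hx.1 hy.1, hy.2⟩
    have hcont : ContinuousOn (deriv v) (Set.Icc x a) := hderivCont.mono hsub
    have hdiff : DifferentiableOn ℝ (deriv v) (Set.Ioo x a) := by
      intro y hy
      exact ((hode y (hsub' hy)).1).differentiableWithinAt
    obtain ⟨c, hc, hceq⟩ := exists_deriv_eq_slope (deriv v) hxa hcont hdiff
    refine ⟨c, hc, ?_⟩
    have hcmem : c ∈ Set.Ioo (a - δ) a := hsub' hc
    have hode_c := (hode c hcmem).2
    have hv'x : 1 ≤ deriv v x := hv' x ⟨hx.1, by linarith⟩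
    have hdd : deriv (deriv v) c ≤ 0 := by
      rw [hceq, hderiv_a]
      apply div_nonpos_of_nonpos_of_nonneg <;> linarith
    have hs2 : 0 < s ^ 2 / 2 := by positivity
    simp only [hF]
    nlinarith [hode_c, hdd, hs2]
  -- F a ≥ 0 by continuity
  have hFa : 0 ≤ F a := by
    by_contra h
    push_neg at h
    have hev : ∀ᶠ y in nhds a, F y < 0 := hFcont.eventually_lt continuousAt_const h
    obtain ⟨η, hη, hball⟩ := Metric.eventually_nhds_iff.mp hev
    have hmin : 0 < min δ η := lt_min hδ hη
    have hxmem : a - min δ η / 2 ∈ Set.Ioo (a - δ) a := by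
      constructor
      · have := min_le_left δ η; linarith
      · linarith
    obtain ⟨c, hc, hFc⟩ := key _ hxmem
    have hdist : dist c a < η := by
      rw [Real.dist_eq, abs_of_nonpos (by linarith [hc.2])]
      have := min_le_right δ η
      have := hc.1
      linarith
    exact absurd (hball hdist) (not_lt.mpr hFc)
  -- equality at a
  have hsup_a := hsuper a ⟨le_rfl, by linarith⟩
  have hEa : r * v a = μ * B - α (max (k - a) 0) := by
    have hFa' : F a = (μ * B - α (max (k - a) 0)) * 1 - r * v a := by
      simp only [hF, hderiv_a]
    rw [hFa'] at hFa
    linarith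
  -- a ≥ k
  have hka : k ≤ a := by
    by_contra hlt
    push_neg at hlt
    set x := a + min (k - a) ε / 2 with hxdef
    have hmin : 0 < min (k - a) ε := lt_min (by linarith) hε
    have hminl := min_le_left (k - a) ε
    have hminr := min_le_right (k - a) ε
    have hx1 : a < x := by rw [hxdef]; linarith
    have hx2 : x < a + ε := by rw [hxdef]; linarith
    have hx3 : x < k := by rw [hxdef]; linarith
    have hsx := hsuper x ⟨le_of_lt hx1, hx2⟩
    have hvx : v x = v a + (x - a) := haff x ⟨le_of_lt hx1, hx2⟩
    have hmax1 : max (k - x) 0 = k - x := max_eq_left (by linarith)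
    have hmax2 : max (k - a) 0 = k - a := max_eq_left (by linarith)
    have hlt2 : k - x < k - a := by linarith
    obtain ⟨c, hc, hceq⟩ := exists_deriv_eq_slope α hlt2
      hα.continuous.continuousOn hα.differentiableOn
    have hαc := hα' c
    have hxa0 : (0:ℝ) < x - a := by linarith
    have h1 : (α (k - a) - α (k - x)) / (x - a) = deriv α c := by
      rw [show x - a = (k - a) - (k - x) by ring]; exact hceq.symm
    have h2 : α (k - a) - α (k - x) = deriv α c * (x - a) :=
      (div_eq_iff hxa0.ne').mp h1
    rw [hmax1] at hsx
    rw [hmax2] at hEa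
    nlinarith [hsx, hEa, h2, hαc, hvx, hxa0]
  refine ⟨hka, ?_⟩
  rw [max_eq_right (by linarith : k - a ≤ 0), hα0] at hEa
  linarith
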